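/- Let S be a real symmetric positive definite n×n matrix and A a real skew-symmetric n×n matrix. Then det(S + A) ≥ det(S) > 0; in particular S + A is invertible. -/

import Mathlib

open Matrix

lemma aux_det_one_add_posSemidef {m : Type*} [Fintype m] [DecidableEq m]
    {M : Matrix m m ℝ} (hM : M.PosSemidef) : 1 ≤ (1 + M).det := by
  have hN : (1 + M).IsHermitian := by
    have h1 : (1 : Matrix m m ℝ).IsHermitian := isHermitian_one
    exact h1.add hM.1
  have hdet := hN.det_eq_prod_eigenvalues
  have key : ∀ i, 1 ≤ hN.eigenvalues i := by
    intro i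
    rw [hN.eigenvalues_eq]
    set v : m → ℝ := ⇑(hN.eigenvectorBasis i) with hv
    have hnorm : ‖hN.eigenvectorBasis i‖ = 1 := hN.eigenvectorBasis.orthonormal.1 i
    have h1 : star v ⬝ᵥ ((1 + M) *ᵥ v) = star v ⬝ᵥ v + star v ⬝ᵥ (M *ᵥ v) := by
      rw [add_mulVec, one_mulVec, dotProduct_add]
    have h2 : (0:ℝ) ≤ star v ⬝ᵥ (M *ᵥ v) := by
      have := hM.dotProduct_mulVec_nonneg v
      simpa using this
    have h3 : star v ⬝ᵥ v = 1 := by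
      have hin : (inner ℝ (hN.eigenvectorBasis i) (hN.eigenvectorBasis i) : ℝ) = 1 := by
        rw [real_inner_self_eq_norm_sq, hnorm]; norm_num
      rw [PiLp.inner_apply] at hin
      simpa [dotProduct, RCLike.inner_apply, conj_trivial, mul_comm, hv, ← pow_two] using hin
    simp only [RCLike.re_to_real, h1, h3]
    linarith
  calc (1:ℝ) = ∏ _i : m, (1:ℝ) := by simp
    _ ≤ ∏ i, hN.eigenvalues i :=
        Finset.prod_le_prod (fun _ _ => zero_le_one) (fun i _ => key i)
    _ = (1 + M).det := by rw [hdet]; norm_num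

lemma aux_skew_det_sq {m : Type*} [Fintype m] [DecidableEq m]
    {B : Matrix m m ℝ} (hB : Bᵀ = -B) : (1 + B).det ^ 2 = (1 + Bᵀ * B).det := by
  have h1 : (1 + B).det = (1 + Bᵀ).det := by
    rw [← Matrix.det_transpose (1 + B), transpose_add, transpose_one]
  have h2 : (1 + Bᵀ) * (1 + B) = 1 + Bᵀ * B := by
    rw [hB]; noncomm_ring
  rw [pow_two]
  nth_rewrite 2 [h1]
  rw [mul_comm, ← Matrix.det_mul, h2]

lemma aux_skew_one_le_det {m : Type*} [Fintype m] [DecidableEq m]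
    {B : Matrix m m ℝ} (hB : Bᵀ = -B) : 1 ≤ (1 + B).det := by
  have sq_ge : ∀ t : ℝ, 1 ≤ (1 + t • B).det ^ 2 := by
    intro t
    have hskew : (t • B)ᵀ = -(t • B) := by rw [transpose_smul, hB, smul_neg]
    rw [aux_skew_det_sq hskew]
    have hps := posSemidef_conjTranspose_mul_self (t • B)
    rw [conjTranspose_eq_transpose_of_trivial] at hps
    exact aux_det_one_add_posSemidef hps
  have hne : ∀ t : ℝ, (1 + t • B).det ≠ 0 := by
    intro t h
    have := sq_ge t
    rw [h] at this; norm_num at this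
  have hcont : Continuous fun t : ℝ => (1 + t • B).det := by
    apply Continuous.matrix_det
    exact continuous_const.add (continuous_id.smul continuous_const)
  have hpos : 0 < (1 + B).det := by
    by_contra h
    push_neg at h
    have h1 : (fun t : ℝ => (1 + t • B).det) 1 ≤ 0 := by simpa using h
    have h0mem : (0:ℝ) ∈ Set.Icc ((fun t : ℝ => (1 + t • B).det) 1)
        ((fun t : ℝ => (1 + t • B).det) 0) := by
      constructor
      · exact h1
      · simp
    obtain ⟨t, _, ht⟩ :=
      intermediate_value_Icc' (by norm_num : (0:ℝ) ≤ 1) hcont.continuousOn h0mem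
    exact hne t ht
  have h1 : 1 ≤ (1 + B).det ^ 2 := by simpa using sq_ge 1
  nlinarith [h1, hpos]

theorem stmt_4 {n : ℕ} (S A : Matrix (Fin n) (Fin n) ℝ)
    (hS : S.IsSymm) (hSpd : S.PosDef) (hA : Aᵀ = -A) :
    S.det ≤ (S + A).det ∧ 0 < S.det ∧ IsUnit (S + A) := by
  have hdetS : 0 < S.det := hSpd.det_pos
  obtain ⟨R, hRR, hRsymm⟩ : ∃ R : Matrix (Fin n) (Fin n) ℝ, R * R = S ∧ Rᵀ = R := by
    open scoped MatrixOrder in refine ⟨CFC.sqrt S, CFC.sqrt_mul_sqrt_self S hSpd.posSemidef.nonneg, ?_⟩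
    rw [← conjTranspose_eq_transpose_of_trivial]
    open scoped MatrixOrder in exact (CFC.sqrt_nonneg S).posSemidef.1
  have hdetR : R.det * R.det = S.det := by rw [← det_mul, hRR]
  have hRunit : IsUnit R.det := by
    rw [isUnit_iff_ne_zero]
    intro h
    rw [h, mul_zero] at hdetR
    exact hdetS.ne (hdetR)
  set B := R⁻¹ * A * R⁻¹ with hBdef
  have hRinvT : (R⁻¹)ᵀ = R⁻¹ := by rw [transpose_nonsing_inv, hRsymm]
  have hBskew : Bᵀ = -B := by
    rw [hBdef, transpose_mul, transpose_mul, hRinvT, hA,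
      Matrix.neg_mul, Matrix.mul_neg, Matrix.mul_assoc]
  have hfact : R * (1 + B) * R = S + A := by
    rw [hBdef, Matrix.mul_add, Matrix.mul_one, Matrix.add_mul, hRR]
    congr 1
    calc R * (R⁻¹ * A * R⁻¹) * R = (R * R⁻¹) * A * (R⁻¹ * R) := by
          simp only [Matrix.mul_assoc]
      _ = A := by rw [mul_nonsing_inv R hRunit, nonsing_inv_mul R hRunit,
          Matrix.one_mul, Matrix.mul_one]
  have hdet : (S + A).det = S.det * (1 + B).det := by
    rw [← hfact, det_mul, det_mul]
    rw [← hdetR]; ring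
  have hone : 1 ≤ (1 + B).det := aux_skew_one_le_det hBskew
  have hle : S.det ≤ (S + A).det := by
    rw [hdet]
    nlinarith
  refine ⟨hle, hdetS, ?_⟩
  refine (Matrix.isUnit_iff_isUnit_det _).mpr (isUnit_iff_ne_zero.mpr ?_)
  intro h
  rw [h] at hle
  linarith
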